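/- (Corollary 4.1.) Let N ≥ 3 be an integer, let 0 ≤ s < 2 and σ > 1. Let (u_n) be a sequence of measurable functions ℝ^N → ℝ with sup_n ∫_{ℝ^N} |u_n(x)|^{2^*(s)} ‖x‖^{−s} dx < ∞, and suppose u_n → u almost everywhere on ℝ^N. Then ∫_{ℝ^N} | |u_n|^{σ−2} u_n − |u_n − u|^{σ−2}(u_n − u) − |u|^{σ−2} u |^{2^*(s)/(σ−1)}(x) ‖x‖^{−s} dx → 0 as n → ∞, i.e. the normalized difference ( |u_n|^{σ−2}u_n − |u_n−u|^{σ−2}(u_n−u) − |u|^{σ−2}u ) / ‖x‖^{(σ−1)s/2^*(s)} converges to 0 in L^{2^*(s)/(σ−1)}(ℝ^N). -/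

import Mathlib

open MeasureTheory Filter

namespace Stmt13Aux

noncomputable def phi (p t : ℝ) : ℝ := Real.sign t * |t| ^ p

lemma phi_zero (p : ℝ) : phi p 0 = 0 := by simp [phi]

lemma phi_eq {p : ℝ} (hp : 0 < p) (t : ℝ) :
    phi p t = (max t 0) ^ p - (max (-t) 0) ^ p := by
  rcases lt_trichotomy t 0 with h | rfl | h
  · rw [phi, Real.sign_of_neg h, max_eq_right h.le, max_eq_left (by linarith), abs_of_neg h,
      Real.zero_rpow hp.ne']
    ring
  · simp [phi, Real.zero_rpow hp.ne']
  · rw [phi, Real.sign_of_pos h, max_eq_left h.le, max_eq_right (by linarith), abs_of_pos h,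
      Real.zero_rpow hp.ne']
    ring

lemma phi_cont {p : ℝ} (hp : 0 < p) : Continuous (phi p) := by
  have h1 : Continuous fun t : ℝ => (max t 0) ^ p :=
    ((continuous_id.max continuous_const).rpow_const fun x => Or.inr hp.le)
  have h2 : Continuous fun t : ℝ => (max (-t) 0) ^ p :=
    ((continuous_neg.max continuous_const).rpow_const fun x => Or.inr hp.le)
  have h3 : Continuous fun t : ℝ => (max t 0) ^ p - (max (-t) 0) ^ p := h1.sub h2
  convert h3 using 1
  funext t
  exact phi_eq hp t

lemma abs_phi_le (p t : ℝ) : |phi p t| ≤ |t| ^ p := by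
  rw [phi, abs_mul, abs_of_nonneg (Real.rpow_nonneg (abs_nonneg t) p)]
  rcases Real.sign_apply_eq t with h | h | h <;> rw [h] <;>
    simp [Real.rpow_nonneg (abs_nonneg t) p]

lemma phi_neg (p t : ℝ) : phi p (-t) = - phi p t := by
  rw [phi, phi, Real.sign_neg, abs_neg]; ring

lemma phi_smul {p l : ℝ} (hl : 0 < l) (t : ℝ) : phi p (l * t) = l ^ p * phi p t := by
  have hsign : Real.sign (l * t) = Real.sign t := by
    rcases lt_trichotomy t 0 with h | rfl | h
    · rw [Real.sign_of_neg h, Real.sign_of_neg (mul_neg_of_pos_of_neg hl h)]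
    · simp
    · rw [Real.sign_of_pos h, Real.sign_of_pos (mul_pos hl h)]
  rw [phi, phi, hsign, abs_mul, abs_of_pos hl, Real.mul_rpow hl.le (abs_nonneg t)]
  ring

lemma rpow_add_le {q : ℝ} (hq : 0 < q) {a b : ℝ} (ha : 0 ≤ a) (hb : 0 ≤ b) :
    (a + b) ^ q ≤ 2 ^ q * (a ^ q + b ^ q) := by
  have h1 : a + b ≤ 2 * max a b := by
    rcases le_total a b with h | h
    · rw [max_eq_right h]; linarith
    · rw [max_eq_left h]; linarith
  have h2 : (a + b) ^ q ≤ (2 * max a b) ^ q :=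
    Real.rpow_le_rpow (by linarith) h1 hq.le
  have h3 : (2 * max a b) ^ q = 2 ^ q * (max a b) ^ q :=
    Real.mul_rpow (by norm_num) (le_max_of_le_left ha)
  have h4 : (max a b) ^ q ≤ a ^ q + b ^ q := by
    rcases le_total a b with h | h
    · rw [max_eq_right h]
      have := Real.rpow_nonneg ha q
      linarith
    · rw [max_eq_left h]
      have := Real.rpow_nonneg hb q
      linarith
  have h5 : (0:ℝ) ≤ 2 ^ q := Real.rpow_nonneg (by norm_num) q
  calc (a + b) ^ q ≤ 2 ^ q * (max a b) ^ q := by rw [← h3]; exact h2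
    _ ≤ 2 ^ q * (a ^ q + b ^ q) := mul_le_mul_of_nonneg_left h4 h5

lemma key_unit {p : ℝ} (hp : 0 < p) {ε : ℝ} (hε : 0 < ε) :
    ∃ C : ℝ, 0 ≤ C ∧ ∀ c : ℝ, |phi p (1 + c) - phi p 1 - phi p c| ≤ ε + C * |c| ^ p := by
  set ψ : ℝ → ℝ := fun c => phi p (1 + c) - phi p 1 - phi p c with hψdef
  have hcont : Continuous ψ :=
    (((phi_cont hp).comp (continuous_const.add continuous_id)).sub continuous_const).sub
      (phi_cont hp)
  have hψ0 : ψ 0 = 0 := by simp [hψdef, phi_zero]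
  obtain ⟨δ, hδ, hδ'⟩ := Metric.continuousAt_iff.1 (hcont.continuousAt (x := 0)) ε hε
  refine ⟨(1 + 1/δ) ^ p + (δ⁻¹) ^ p + 1, by positivity, fun c => ?_⟩
  rcases lt_or_ge (|c|) δ with h | h
  · have h2 : dist (ψ c) (ψ 0) < ε := hδ' (by simpa [Real.dist_eq] using h)
    rw [hψ0, dist_zero_right, Real.norm_eq_abs] at h2
    have h2' : |phi p (1 + c) - phi p 1 - phi p c| < ε := h2
    have hpos : 0 ≤ ((1 + 1/δ) ^ p + (δ⁻¹) ^ p + 1) * |c| ^ p := by positivity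
    linarith [h2'.le]
  · have hc0 : 0 < |c| := lt_of_lt_of_le hδ h
    have hb1 : |ψ c| ≤ |1 + c| ^ p + 1 + |c| ^ p := by
      have t1 := abs_phi_le p (1 + c)
      have t2 := abs_phi_le p 1
      have t3 := abs_phi_le p c
      rw [abs_one, Real.one_rpow] at t2
      calc |ψ c| ≤ |phi p (1 + c)| + |phi p 1| + |phi p c| := by
            simp only [hψdef]
            exact (abs_sub _ _).trans (add_le_add_left (abs_sub _ _) _)
        _ ≤ |1 + c| ^ p + 1 + |c| ^ p := by linarith
    have hb2 : |1 + c| ^ p ≤ (1 + 1/δ) ^ p * |c| ^ p := by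
      have e1 : |1 + c| ≤ (1 + 1/δ) * |c| := by
        have : (1:ℝ) ≤ |c| / δ := (one_le_div hδ).2 h
        calc |1 + c| ≤ 1 + |c| := (abs_add_le _ _).trans (by rw [abs_one])
          _ ≤ |c|/δ + |c| := by linarith
          _ = (1 + 1/δ) * |c| := by ring
      calc |1 + c| ^ p ≤ ((1 + 1/δ) * |c|) ^ p :=
            Real.rpow_le_rpow (abs_nonneg _) e1 hp.le
        _ = (1 + 1/δ) ^ p * |c| ^ p := Real.mul_rpow (by positivity) (abs_nonneg _)
    have hb3 : (1:ℝ) ≤ (δ⁻¹) ^ p * |c| ^ p := by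
      have e1 : (1:ℝ) ≤ δ⁻¹ * |c| := by
        rw [← one_le_div hδ] at h
        calc (1:ℝ) ≤ |c| / δ := h
          _ = δ⁻¹ * |c| := by ring
      calc (1:ℝ) = 1 ^ p := (Real.one_rpow p).symm
        _ ≤ (δ⁻¹ * |c|) ^ p := Real.rpow_le_rpow (by norm_num) e1 hp.le
        _ = (δ⁻¹) ^ p * |c| ^ p := Real.mul_rpow (by positivity) (abs_nonneg _)
    have : |ψ c| ≤ ((1 + 1/δ) ^ p + (δ⁻¹) ^ p + 1) * |c| ^ p := by
      have := Real.rpow_nonneg (abs_nonneg c) p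
      nlinarith
    linarith

lemma keyA {p : ℝ} (hp : 0 < p) {ε : ℝ} (hε : 0 < ε) :
    ∃ C : ℝ, 0 ≤ C ∧ ∀ a b : ℝ,
      |phi p (a + b) - phi p a - phi p b| ≤ ε * |a| ^ p + C * |b| ^ p := by
  obtain ⟨C, hC0, hC⟩ := key_unit hp hε
  refine ⟨C, hC0, fun a b => ?_⟩
  have hunit : ∀ e : ℝ, e = 1 ∨ e = -1 → ∀ c : ℝ,
      |phi p (e + c) - phi p e - phi p c| ≤ ε + C * |c| ^ p := by
    rintro e (rfl | rfl) c
    · exact hC c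
    · have h := hC (-c)
      have e1 : phi p (-1 + c) = - phi p (1 + -c) := by
        rw [← phi_neg]; congr 1; ring
      have e2 : phi p (-1 : ℝ) = - phi p 1 := by
        rw [← phi_neg]
      have e3 : phi p c = - phi p (-c) := by rw [phi_neg]; ring
      have heq : phi p (-1 + c) - phi p (-1 : ℝ) - phi p c
          = -(phi p (1 + -c) - phi p 1 - phi p (-c)) := by
        rw [e1, e2, e3]; ring
      rw [heq, abs_neg]
      simpa [abs_neg] using h
  rcases eq_or_ne a 0 with rfl | ha
  · have : phi p (0 + b) - phi p 0 - phi p b = 0 := by rw [zero_add, phi_zero]; ring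
    rw [this, abs_zero]
    positivity
  · set l := |a| with hl
    have hl0 : 0 < l := abs_pos.mpr ha
    have hlp : 0 < l ^ p := Real.rpow_pos_of_pos hl0 p
    set e := Real.sign a with he
    have hee : e = 1 ∨ e = -1 := (Real.sign_apply_eq_of_ne_zero a ha).symm.imp (fun h => h) fun h => h
    have hae : a = l * e := by
      rcases lt_trichotomy a 0 with h | h | h
      · rw [hl, he, abs_of_neg h, Real.sign_of_neg h]; ring
      · exact absurd h ha
      · rw [hl, he, abs_of_pos h, Real.sign_of_pos h]; ring
    set c := b / l with hcdef
    have hbc : b = l * c := by rw [hcdef]; field_simp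
    have h1 : phi p (a + b) = l ^ p * phi p (e + c) := by
      rw [hae, hbc, ← mul_add, phi_smul hl0]
    have h2 : phi p a = l ^ p * phi p e := by rw [hae, phi_smul hl0]
    have h3 : phi p b = l ^ p * phi p c := by rw [hbc, phi_smul hl0]
    have h4 : |a| ^ p = l ^ p := by rw [hl]
    have h5 : |b| ^ p = l ^ p * |c| ^ p := by
      rw [hbc, abs_mul, abs_of_pos hl0, Real.mul_rpow hl0.le (abs_nonneg c)]
    have h6 := hunit e hee c
    calc |phi p (a + b) - phi p a - phi p b|
        = l ^ p * |phi p (e + c) - phi p e - phi p c| := by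
          rw [h1, h2, h3, ← mul_sub, ← mul_sub, abs_mul, abs_of_pos hlp]
      _ ≤ l ^ p * (ε + C * |c| ^ p) := mul_le_mul_of_nonneg_left h6 hlp.le
      _ = ε * |a| ^ p + C * |b| ^ p := by rw [h4, h5]; ring

end Stmt13Aux

open Stmt13Aux

/-- Corollary 4.1: Brezis–Lieb type convergence of the nonlinearities
`|u|^{σ-2}u` in the weighted Lebesgue space. -/
theorem stmt_13 (N : ℕ) (hN : 3 ≤ N) (s σ : ℝ)
    (hs0 : 0 ≤ s) (hs2 : s < 2) (hσ : 1 < σ)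
    (u : ℕ → EuclideanSpace ℝ (Fin N) → ℝ) (hu : ∀ n, Measurable (u n))
    (u₀ : EuclideanSpace ℝ (Fin N) → ℝ)
    (hbdd : (⨆ n, ∫⁻ x,
        ENNReal.ofReal (|u n x| ^ (2 * ((N : ℝ) - s) / ((N : ℝ) - 2)) * ‖x‖ ^ (-s))) < ⊤)
    (hae : ∀ᵐ (x : EuclideanSpace ℝ (Fin N)) ∂volume,
      Tendsto (fun n => u n x) atTop (nhds (u₀ x))) :
    Tendsto (fun n => ∫⁻ x, ENNReal.ofReal
        (|Real.sign (u n x) * |u n x| ^ (σ - 1)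
            - Real.sign (u n x - u₀ x) * |u n x - u₀ x| ^ (σ - 1)
            - Real.sign (u₀ x) * |u₀ x| ^ (σ - 1)|
              ^ (2 * ((N : ℝ) - s) / ((N : ℝ) - 2) / (σ - 1))
          * ‖x‖ ^ (-s)))
      atTop (nhds 0) := by
  have hN2 : (2:ℝ) < (N:ℝ) := by
    have : (3:ℝ) ≤ (N:ℝ) := by exact_mod_cast hN
    linarith
  set p : ℝ := σ - 1 with hpdef
  have hp : 0 < p := by simp only [hpdef]; linarith
  set P : ℝ := 2 * ((N : ℝ) - s) / ((N : ℝ) - 2) with hPdef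
  have hP : 0 < P := by
    apply div_pos <;> [nlinarith; linarith]
  set q : ℝ := P / p with hqdef
  have hq : 0 < q := div_pos hP hp
  have hpq : p * q = P := by
    rw [hqdef]; field_simp
  -- measurability basics
  have hw : Measurable fun x : EuclideanSpace ℝ (Fin N) => ‖x‖ ^ (-s) := by fun_prop
  have hu₀ : AEMeasurable u₀ volume :=
    aemeasurable_of_tendsto_metrizable_ae atTop (fun n => (hu n).aemeasurable) hae
  have hdm : ∀ n, AEMeasurable (fun x => u n x - u₀ x) volume :=
    fun n => (hu n).aemeasurable.sub hu₀
  have hmeas : ∀ (r : ℝ), 0 < r → ∀ (v : EuclideanSpace ℝ (Fin N) → ℝ), AEMeasurable v volume →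
      AEMeasurable (fun x => ENNReal.ofReal (|v x| ^ r * ‖x‖ ^ (-s))) volume := by
    intro r hr v hv
    apply ENNReal.measurable_ofReal.comp_aemeasurable
    have h1 : AEMeasurable (fun x => |v x| ^ r) volume :=
      ((continuous_abs.rpow_const fun t => Or.inr hr.le).measurable).comp_aemeasurable hv
    exact h1.mul hw.aemeasurable
  -- the supremum bound
  set M := ⨆ n, ∫⁻ x, ENNReal.ofReal (|u n x| ^ P * ‖x‖ ^ (-s)) with hMdef
  have hMlt : M < ⊤ := hbdd
  have hIn : ∀ n, ∫⁻ x, ENNReal.ofReal (|u n x| ^ P * ‖x‖ ^ (-s)) ≤ M := fun n =>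
    le_iSup (fun m => ∫⁻ x, ENNReal.ofReal (|u m x| ^ P * ‖x‖ ^ (-s))) n
  -- Fatou : the limit function is also in the weighted space
  have habsP : ∀ᵐ x ∂(volume : Measure (EuclideanSpace ℝ (Fin N))),
      Tendsto (fun n => ENNReal.ofReal (|u n x| ^ P * ‖x‖ ^ (-s))) atTop
        (nhds (ENNReal.ofReal (|u₀ x| ^ P * ‖x‖ ^ (-s)))) := by
    filter_upwards [hae] with x hx
    have h1 : Continuous fun t : ℝ => ENNReal.ofReal (|t| ^ P * ‖x‖ ^ (-s)) :=
      ENNReal.continuous_ofReal.comp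
        ((continuous_abs.rpow_const fun t => Or.inr hP.le).mul continuous_const)
    exact (h1.tendsto (u₀ x)).comp hx
  have hT : ∫⁻ x, ENNReal.ofReal (|u₀ x| ^ P * ‖x‖ ^ (-s)) ≤ M := by
    have hle := lintegral_liminf_le' (μ := volume) (u := atTop)
      (fun n => hmeas P hP (u n) (hu n).aemeasurable)
    have heq : ∫⁻ x, ENNReal.ofReal (|u₀ x| ^ P * ‖x‖ ^ (-s))
        = ∫⁻ x, liminf (fun n => ENNReal.ofReal (|u n x| ^ P * ‖x‖ ^ (-s))) atTop := by
      apply lintegral_congr_ae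
      filter_upwards [habsP] with x hx
      exact hx.liminf_eq.symm
    rw [heq]
    refine hle.trans ?_
    refine (liminf_le_limsup).trans ?_
    exact limsup_le_iSup.trans (le_of_eq rfl)
  have hTfin : ∫⁻ x, ENNReal.ofReal (|u₀ x| ^ P * ‖x‖ ^ (-s)) ≠ ⊤ :=
    (lt_of_le_of_lt hT hMlt).ne
  -- uniform bound on the differences
  have hdle : ∀ n, ∫⁻ x, ENNReal.ofReal (|u n x - u₀ x| ^ P * ‖x‖ ^ (-s))
      ≤ ENNReal.ofReal (2 ^ P) * (M + M) := by
    intro n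
    have hpt : ∀ x : EuclideanSpace ℝ (Fin N),
        ENNReal.ofReal (|u n x - u₀ x| ^ P * ‖x‖ ^ (-s)) ≤
        ENNReal.ofReal (2 ^ P) * (ENNReal.ofReal (|u n x| ^ P * ‖x‖ ^ (-s))
          + ENNReal.ofReal (|u₀ x| ^ P * ‖x‖ ^ (-s))) := by
      intro x
      have hwx : 0 ≤ ‖x‖ ^ (-s) := Real.rpow_nonneg (norm_nonneg x) _
      have htri : |u n x - u₀ x| ≤ |u n x| + |u₀ x| := abs_sub _ _
      have h1 : |u n x - u₀ x| ^ P ≤ 2 ^ P * (|u n x| ^ P + |u₀ x| ^ P) :=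
        (Real.rpow_le_rpow (abs_nonneg _) htri hP.le).trans
          (rpow_add_le hP (abs_nonneg _) (abs_nonneg _))
      calc ENNReal.ofReal (|u n x - u₀ x| ^ P * ‖x‖ ^ (-s))
          ≤ ENNReal.ofReal ((2 ^ P * (|u n x| ^ P + |u₀ x| ^ P)) * ‖x‖ ^ (-s)) :=
            ENNReal.ofReal_le_ofReal (mul_le_mul_of_nonneg_right h1 hwx)
        _ = ENNReal.ofReal (2 ^ P) * (ENNReal.ofReal (|u n x| ^ P * ‖x‖ ^ (-s))
              + ENNReal.ofReal (|u₀ x| ^ P * ‖x‖ ^ (-s))) := by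
            rw [mul_assoc, add_mul,
              ENNReal.ofReal_mul (by positivity),
              ENNReal.ofReal_add (by positivity) (by positivity)]
    calc ∫⁻ x, ENNReal.ofReal (|u n x - u₀ x| ^ P * ‖x‖ ^ (-s))
        ≤ ∫⁻ x, ENNReal.ofReal (2 ^ P) * (ENNReal.ofReal (|u n x| ^ P * ‖x‖ ^ (-s))
            + ENNReal.ofReal (|u₀ x| ^ P * ‖x‖ ^ (-s))) := lintegral_mono hpt
      _ = ENNReal.ofReal (2 ^ P) * ((∫⁻ x, ENNReal.ofReal (|u n x| ^ P * ‖x‖ ^ (-s)))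
            + ∫⁻ x, ENNReal.ofReal (|u₀ x| ^ P * ‖x‖ ^ (-s))) := by
          rw [lintegral_const_mul' _ _ ENNReal.ofReal_ne_top,
            lintegral_add_left' (hmeas P hP (u n) (hu n).aemeasurable)]
      _ ≤ ENNReal.ofReal (2 ^ P) * (M + M) :=
          mul_le_mul_right (add_le_add (hIn n) hT) _
  set M' : ENNReal := ENNReal.ofReal (2 ^ P) * (M + M) + 1 with hM'def
  have hM'top : M' ≠ ⊤ := by
    rw [hM'def]
    exact ENNReal.add_ne_top.2 ⟨ENNReal.mul_ne_top ENNReal.ofReal_ne_top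
      (ENNReal.add_ne_top.2 ⟨hMlt.ne, hMlt.ne⟩), ENNReal.one_ne_top⟩
  -- the function studied
  rw [ENNReal.tendsto_atTop_zero]
  intro ε₀ hε₀
  set ε' := min ε₀ 1 with hε'def
  have hε' : 0 < ε' := lt_min hε₀ one_pos
  have hhalf : (0:ENNReal) < ε' / 2 := ENNReal.div_pos hε'.ne' (by norm_num)
  -- choose ε
  have hexist : ∃ ε : ℝ, 0 < ε ∧ ENNReal.ofReal (2 ^ q * ε ^ q) * M' ≤ ε' / 2 := by
    have h0 : Tendsto (fun ε : ℝ => ε ^ q) (nhdsWithin 0 (Set.Ioi 0)) (nhds 0) := by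
      have hc : ContinuousAt (fun x : ℝ => x ^ q) 0 :=
        Real.continuousAt_rpow_const 0 q (Or.inr hq.le)
      have h00 : (0:ℝ) ^ q = 0 := Real.zero_rpow hq.ne'
      have := hc.tendsto
      rw [h00] at this
      exact this.mono_left nhdsWithin_le_nhds
    have h1 : Tendsto (fun ε : ℝ => ENNReal.ofReal (2 ^ q * ε ^ q) * M')
        (nhdsWithin 0 (Set.Ioi 0)) (nhds 0) := by
      have h2 : Tendsto (fun ε : ℝ => 2 ^ q * ε ^ q) (nhdsWithin 0 (Set.Ioi 0)) (nhds 0) := by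
        have := h0.const_mul (2 ^ q : ℝ)
        simpa using this
      have h3 : Tendsto (fun ε : ℝ => ENNReal.ofReal (2 ^ q * ε ^ q))
          (nhdsWithin 0 (Set.Ioi 0)) (nhds 0) := by
        have := (ENNReal.continuous_ofReal.tendsto 0).comp h2
        simpa [Function.comp_def] using this
      have h4 := ENNReal.Tendsto.mul_const h3 (Or.inr hM'top)
      simpa using h4
    have h5 : ∀ᶠ ε : ℝ in nhdsWithin 0 (Set.Ioi 0),
        ENNReal.ofReal (2 ^ q * ε ^ q) * M' < ε' / 2 :=
      h1.eventually_lt_const hhalf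
    have h6 : ∀ᶠ ε : ℝ in nhdsWithin 0 (Set.Ioi 0), ε ∈ Set.Ioi (0:ℝ) :=
      eventually_mem_nhdsWithin
    obtain ⟨ε, hε1, hε2⟩ := (h5.and h6).exists
    exact ⟨ε, hε2, hε1.le⟩
  obtain ⟨ε, hεpos, hεsmall⟩ := hexist
  obtain ⟨C, hC0, hC⟩ := keyA hp hεpos
  -- the Brezis-Lieb remainder
  set F : ℕ → EuclideanSpace ℝ (Fin N) → ℝ := fun n x =>
    phi p (u n x) - phi p (u n x - u₀ x) - phi p (u₀ x) with hFdef
  set W : ℕ → EuclideanSpace ℝ (Fin N) → ℝ := fun n x =>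
    max (|F n x| - ε * |u n x - u₀ x| ^ p) 0 with hWdef
  have hW0 : ∀ n x, 0 ≤ W n x := fun n x => le_max_right _ _
  have hWle : ∀ n x, W n x ≤ C * |u₀ x| ^ p := by
    intro n x
    have hkey := hC (u n x - u₀ x) (u₀ x)
    have hcomb : (u n x - u₀ x) + u₀ x = u n x := by ring
    rw [hcomb] at hkey
    have : |F n x| ≤ ε * |u n x - u₀ x| ^ p + C * |u₀ x| ^ p := hkey
    apply max_le (by linarith) (by positivity)
  have hFle : ∀ n x, |F n x| ≤ W n x + ε * |u n x - u₀ x| ^ p := by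
    intro n x
    have := le_max_left (|F n x| - ε * |u n x - u₀ x| ^ p) 0
    linarith [this]
  -- measurability of W and F
  have hFm : ∀ n, AEMeasurable (F n) volume := by
    intro n
    have h1 : AEMeasurable (fun x => phi p (u n x)) volume :=
      ((phi_cont hp).measurable).comp_aemeasurable (hu n).aemeasurable
    have h2 : AEMeasurable (fun x => phi p (u n x - u₀ x)) volume :=
      ((phi_cont hp).measurable).comp_aemeasurable (hdm n)
    have h3 : AEMeasurable (fun x => phi p (u₀ x)) volume :=
      ((phi_cont hp).measurable).comp_aemeasurable hu₀
    exact (h1.sub h2).sub h3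
  have hWm : ∀ n, AEMeasurable (W n) volume := by
    intro n
    have h1 : AEMeasurable (fun x => |u n x - u₀ x| ^ p) volume :=
      ((continuous_abs.rpow_const fun t => Or.inr hp.le).measurable).comp_aemeasurable (hdm n)
    have h2 : AEMeasurable (fun x => |F n x|) volume :=
      continuous_abs.measurable.comp_aemeasurable (hFm n)
    exact (h2.sub (h1.const_mul ε)).max aemeasurable_const
  have hrpowq : Measurable fun t : ℝ => t ^ q := by fun_prop
  have hJm : ∀ n, AEMeasurable
      (fun x => ENNReal.ofReal (W n x ^ q * ‖x‖ ^ (-s))) volume := by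
    intro n
    exact ENNReal.measurable_ofReal.comp_aemeasurable
      (((hrpowq).comp_aemeasurable (hWm n)).mul hw.aemeasurable)
  -- dominated convergence for the W-part
  have hJtend : Tendsto (fun n => ∫⁻ x, ENNReal.ofReal (W n x ^ q * ‖x‖ ^ (-s))) atTop
      (nhds 0) := by
    have := tendsto_lintegral_of_dominated_convergence'
      (μ := (volume : Measure (EuclideanSpace ℝ (Fin N))))
      (F := fun n x => ENNReal.ofReal (W n x ^ q * ‖x‖ ^ (-s)))
      (f := fun _ => 0)
      (bound := fun x => ENNReal.ofReal ((C * |u₀ x| ^ p) ^ q * ‖x‖ ^ (-s)))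
      hJm
      (by
        intro n
        apply Eventually.of_forall
        intro x
        apply ENNReal.ofReal_le_ofReal
        apply mul_le_mul_of_nonneg_right _ (Real.rpow_nonneg (norm_nonneg x) _)
        exact Real.rpow_le_rpow (hW0 n x) (hWle n x) hq.le)
      (by
        -- finiteness of the bound
        have heq : ∀ x : EuclideanSpace ℝ (Fin N),
            ENNReal.ofReal ((C * |u₀ x| ^ p) ^ q * ‖x‖ ^ (-s))
            = ENNReal.ofReal (C ^ q) * ENNReal.ofReal (|u₀ x| ^ P * ‖x‖ ^ (-s)) := by
          intro x
          rw [Real.mul_rpow hC0 (Real.rpow_nonneg (abs_nonneg _) _),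
            ← Real.rpow_mul (abs_nonneg _), hpq, mul_assoc,
            ENNReal.ofReal_mul (Real.rpow_nonneg hC0 _)]
        rw [lintegral_congr fun x => heq x,
          lintegral_const_mul' _ _ ENNReal.ofReal_ne_top]
        exact ENNReal.mul_ne_top ENNReal.ofReal_ne_top hTfin)
      (by
        filter_upwards [hae] with x hx
        have hd0 : Tendsto (fun n => u n x - u₀ x) atTop (nhds 0) := by
          have := hx.sub (tendsto_const_nhds (x := u₀ x))
          simpa using this
        have hF0 : Tendsto (fun n => F n x) atTop (nhds 0) := by
          have t1 : Tendsto (fun n => phi p (u n x)) atTop (nhds (phi p (u₀ x))) :=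
            ((phi_cont hp).tendsto _).comp hx
          have t2 : Tendsto (fun n => phi p (u n x - u₀ x)) atTop (nhds (phi p 0)) :=
            ((phi_cont hp).tendsto _).comp hd0
          rw [phi_zero] at t2
          have := (t1.sub t2).sub (tendsto_const_nhds (x := phi p (u₀ x)))
          simpa using this
        have hdp : Tendsto (fun n => ε * |u n x - u₀ x| ^ p) atTop (nhds 0) := by
          have hc : Continuous fun t : ℝ => ε * |t| ^ p :=
            continuous_const.mul (continuous_abs.rpow_const fun t => Or.inr hp.le)
          have := (hc.tendsto 0).comp hd0
          simpa [Real.zero_rpow hp.ne', Function.comp_def] using this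
        have hWx : Tendsto (fun n => W n x) atTop (nhds 0) := by
          have := (hF0.abs.sub hdp).max (tendsto_const_nhds (x := (0:ℝ)))
          simpa using this
        have hc2 : ContinuousAt (fun t : ℝ => ENNReal.ofReal (t ^ q * ‖x‖ ^ (-s))) 0 := by
          apply ENNReal.continuous_ofReal.continuousAt.comp
          exact (Real.continuousAt_rpow_const 0 q (Or.inr hq.le)).mul continuousAt_const
        have := hc2.tendsto.comp hWx
        simpa [Real.zero_rpow hq.ne', Function.comp_def] using this)
    simpa using this
  -- conclusion
  have hmul : Tendsto (fun n => ENNReal.ofReal (2 ^ q)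
      * ∫⁻ x, ENNReal.ofReal (W n x ^ q * ‖x‖ ^ (-s))) atTop (nhds 0) := by
    have := ENNReal.Tendsto.const_mul (a := ENNReal.ofReal (2 ^ q)) hJtend
      (Or.inr ENNReal.ofReal_ne_top)
    simpa using this
  have hev : ∀ᶠ n in atTop, ENNReal.ofReal (2 ^ q)
      * (∫⁻ x, ENNReal.ofReal (W n x ^ q * ‖x‖ ^ (-s))) < ε' / 2 :=
    hmul.eventually_lt_const hhalf
  rw [eventually_atTop] at hev
  obtain ⟨N₀, hN₀⟩ := hev
  refine ⟨N₀, fun n hn => ?_⟩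
  -- main pointwise estimate
  have hpt : ∀ x : EuclideanSpace ℝ (Fin N),
      ENNReal.ofReal (|F n x| ^ q * ‖x‖ ^ (-s))
      ≤ ENNReal.ofReal (2 ^ q) * ENNReal.ofReal (W n x ^ q * ‖x‖ ^ (-s))
        + ENNReal.ofReal (2 ^ q * ε ^ q)
          * ENNReal.ofReal (|u n x - u₀ x| ^ P * ‖x‖ ^ (-s)) := by
    intro x
    have hwx : 0 ≤ ‖x‖ ^ (-s) := Real.rpow_nonneg (norm_nonneg x) _
    have hdp0 : (0:ℝ) ≤ ε * |u n x - u₀ x| ^ p := by positivity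
    have h1 : |F n x| ^ q ≤ (W n x + ε * |u n x - u₀ x| ^ p) ^ q :=
      Real.rpow_le_rpow (abs_nonneg _) (hFle n x) hq.le
    have h2 : (W n x + ε * |u n x - u₀ x| ^ p) ^ q
        ≤ 2 ^ q * (W n x ^ q + (ε * |u n x - u₀ x| ^ p) ^ q) :=
      rpow_add_le hq (hW0 n x) hdp0
    have h3 : (ε * |u n x - u₀ x| ^ p) ^ q = ε ^ q * |u n x - u₀ x| ^ P := by
      rw [Real.mul_rpow hεpos.le (Real.rpow_nonneg (abs_nonneg _) _),
        ← Real.rpow_mul (abs_nonneg _), hpq]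
    have h4 : |F n x| ^ q * ‖x‖ ^ (-s)
        ≤ 2 ^ q * (W n x ^ q * ‖x‖ ^ (-s))
          + (2 ^ q * ε ^ q) * (|u n x - u₀ x| ^ P * ‖x‖ ^ (-s)) := by
      have := mul_le_mul_of_nonneg_right (h1.trans h2) hwx
      rw [h3] at this
      calc |F n x| ^ q * ‖x‖ ^ (-s)
          ≤ 2 ^ q * (W n x ^ q + ε ^ q * |u n x - u₀ x| ^ P) * ‖x‖ ^ (-s) := this
        _ = 2 ^ q * (W n x ^ q * ‖x‖ ^ (-s))
            + (2 ^ q * ε ^ q) * (|u n x - u₀ x| ^ P * ‖x‖ ^ (-s)) := by ring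
    calc ENNReal.ofReal (|F n x| ^ q * ‖x‖ ^ (-s))
        ≤ ENNReal.ofReal (2 ^ q * (W n x ^ q * ‖x‖ ^ (-s))
            + (2 ^ q * ε ^ q) * (|u n x - u₀ x| ^ P * ‖x‖ ^ (-s))) :=
          ENNReal.ofReal_le_ofReal h4
      _ = ENNReal.ofReal (2 ^ q) * ENNReal.ofReal (W n x ^ q * ‖x‖ ^ (-s))
          + ENNReal.ofReal (2 ^ q * ε ^ q)
            * ENNReal.ofReal (|u n x - u₀ x| ^ P * ‖x‖ ^ (-s)) := by
          rw [ENNReal.ofReal_add (by positivity) (by positivity)]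
          congr 1
          · exact ENNReal.ofReal_mul (by positivity)
          · exact ENNReal.ofReal_mul (by positivity)
  -- goal restated with F
  have hgoalEq : (∫⁻ x, ENNReal.ofReal
        (|Real.sign (u n x) * |u n x| ^ p
            - Real.sign (u n x - u₀ x) * |u n x - u₀ x| ^ p
            - Real.sign (u₀ x) * |u₀ x| ^ p| ^ q
          * ‖x‖ ^ (-s)))
      = ∫⁻ x, ENNReal.ofReal (|F n x| ^ q * ‖x‖ ^ (-s)) := rfl
  rw [hgoalEq]
  calc ∫⁻ x, ENNReal.ofReal (|F n x| ^ q * ‖x‖ ^ (-s))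
      ≤ ∫⁻ x, (ENNReal.ofReal (2 ^ q) * ENNReal.ofReal (W n x ^ q * ‖x‖ ^ (-s))
          + ENNReal.ofReal (2 ^ q * ε ^ q)
            * ENNReal.ofReal (|u n x - u₀ x| ^ P * ‖x‖ ^ (-s))) := lintegral_mono hpt
    _ = ENNReal.ofReal (2 ^ q) * (∫⁻ x, ENNReal.ofReal (W n x ^ q * ‖x‖ ^ (-s)))
          + ENNReal.ofReal (2 ^ q * ε ^ q)
            * ∫⁻ x, ENNReal.ofReal (|u n x - u₀ x| ^ P * ‖x‖ ^ (-s)) := by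
        rw [lintegral_add_left' ((hJm n).const_mul _),
          lintegral_const_mul' _ _ ENNReal.ofReal_ne_top,
          lintegral_const_mul' _ _ ENNReal.ofReal_ne_top]
    _ ≤ ε' / 2 + ε' / 2 := by
        apply add_le_add
        · exact (hN₀ n hn).le
        · refine le_trans ?_ hεsmall
          apply mul_le_mul_right
          refine le_trans (hdle n) ?_
          rw [hM'def]
          exact le_self_add
    _ = ε' := ENNReal.add_halves ε'
    _ ≤ ε₀ := min_le_left _ _
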